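/- For Poisson random variables P(θ₁) and P(θ₂) with parameters θ₁, θ₂ > 0, the total variation distance between their laws satisfies d_TV(P(θ₁), P(θ₂)) ≤ |θ₁ − θ₂|. -/

import Mathlib

open MeasureTheory ProbabilityTheory

private lemma tsum_pow_div_fact (x : ℝ) : ∑' n : ℕ, x ^ n / n.factorial = Real.exp x := by
  rw [Real.exp_eq_exp_ℝ, NormedSpace.exp_eq_tsum_div]

private lemma poisson_toReal (θ : NNReal) (A : Set ℕ) :
    (poissonMeasure θ A).toReal = ∑' k, A.indicator (poissonPMFReal θ) k := by
  have h0 : poissonMeasure θ A = ∑' x, A.indicator (⇑(poissonPMF θ)) x := by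
    rw [poissonMeasure, Measure.sum_apply _ (MeasurableSet.of_discrete (s := A))]
    congr 1
    ext n
    by_cases hn : n ∈ A <;> simp [hn, Set.indicator, poissonPMF, poissonPMFReal] <;> rfl
  rw [h0]
  have h1 : ∀ x : ℕ, A.indicator (⇑(poissonPMF θ)) x
      = ENNReal.ofReal (A.indicator (poissonPMFReal θ) x) := by
    intro x
    by_cases hx : x ∈ A <;>
      simp [Set.indicator, hx, poissonPMF] <;> rfl
  simp_rw [h1]
  rw [← ENNReal.ofReal_tsum_of_nonneg
      (fun n => Set.indicator_nonneg (fun _ _ => poissonPMFReal_nonneg) n)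
      ((poissonPMFRealSum θ).summable.indicator A),
    ENNReal.toReal_ofReal
      (tsum_nonneg (fun n => Set.indicator_nonneg (fun _ _ => poissonPMFReal_nonneg) n))]

private lemma poisson_main (a b : NNReal) (hab : a ≤ b) (A : Set ℕ) :
    |(poissonMeasure b A).toReal - (poissonMeasure a A).toReal| ≤ (b : ℝ) - a := by
  rw [poisson_toReal, poisson_toReal]
  set u : ℕ → ℝ := fun k => A.indicator
    (fun k => Real.exp (-(b : ℝ)) * ((b : ℝ) ^ k - (a : ℝ) ^ k) / k.factorial) k with hu
  set v : ℕ → ℝ := fun k => A.indicator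
    (fun k => (Real.exp (-(b : ℝ)) - Real.exp (-(a : ℝ))) * (a : ℝ) ^ k / k.factorial) k with hv
  have ha0 : (0 : ℝ) ≤ a := a.coe_nonneg
  have hab' : (a : ℝ) ≤ b := hab
  -- summability facts
  have sb : Summable (fun k : ℕ => (b : ℝ) ^ k / k.factorial) :=
    Real.summable_pow_div_factorial _
  have sa : Summable (fun k : ℕ => (a : ℝ) ^ k / k.factorial) :=
    Real.summable_pow_div_factorial _
  have sg : Summable (fun k : ℕ =>
      Real.exp (-(b : ℝ)) * ((b : ℝ) ^ k - (a : ℝ) ^ k) / k.factorial) := by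
    have : (fun k : ℕ => Real.exp (-(b : ℝ)) * ((b : ℝ) ^ k - (a : ℝ) ^ k) / k.factorial)
        = fun k : ℕ => Real.exp (-(b : ℝ)) * ((b : ℝ) ^ k / k.factorial)
          - Real.exp (-(b : ℝ)) * ((a : ℝ) ^ k / k.factorial) := by
      ext k; ring
    rw [this]
    exact ((sb.mul_left _).sub (sa.mul_left _))
  have sh : Summable (fun k : ℕ =>
      (Real.exp (-(b : ℝ)) - Real.exp (-(a : ℝ))) * (a : ℝ) ^ k / k.factorial) := by
    simp_rw [mul_div_assoc]
    exact sa.mul_left _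
  have su : Summable u := sg.indicator A
  have sv : Summable v := sh.indicator A
  have key : (∑' k, A.indicator (poissonPMFReal b) k) - ∑' k, A.indicator (poissonPMFReal a) k
      = (∑' k, u k) + ∑' k, v k := by
    rw [← Summable.tsum_sub ((show Summable (poissonPMFReal b) from (poissonPMFRealSum b).summable).indicator A)
        ((show Summable (poissonPMFReal a) from (poissonPMFRealSum a).summable).indicator A), ← Summable.tsum_add su sv]
    congr 1
    ext k
    by_cases hk : k ∈ A <;> simp [u, v, Set.indicator, hk, poissonPMFReal] <;> ring
  have hg_nonneg : ∀ k : ℕ, 0 ≤ Real.exp (-(b : ℝ)) * ((b : ℝ) ^ k - (a : ℝ) ^ k) / k.factorial := by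
    intro k
    have : (a : ℝ) ^ k ≤ (b : ℝ) ^ k := pow_le_pow_left₀ ha0 hab' k
    exact div_nonneg (mul_nonneg (Real.exp_nonneg _) (sub_nonneg.mpr this)) (Nat.cast_nonneg _)
  have hu_nonneg : 0 ≤ ∑' k, u k :=
    tsum_nonneg fun k => Set.indicator_nonneg (fun i _ => hg_nonneg i) k
  have hexp_le : Real.exp ((a : ℝ) - b) ≤ 1 := by
    apply Real.exp_le_one_iff.mpr; linarith
  have htsum_g : ∑' k, Real.exp (-(b : ℝ)) * ((b : ℝ) ^ k - (a : ℝ) ^ k) / k.factorial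
      = 1 - Real.exp ((a : ℝ) - b) := by
    have : (fun k : ℕ => Real.exp (-(b : ℝ)) * ((b : ℝ) ^ k - (a : ℝ) ^ k) / k.factorial)
        = fun k : ℕ => Real.exp (-(b : ℝ)) * ((b : ℝ) ^ k / k.factorial)
          - Real.exp (-(b : ℝ)) * ((a : ℝ) ^ k / k.factorial) := by
      ext k; ring
    rw [this, Summable.tsum_sub (sb.mul_left _) (sa.mul_left _), tsum_mul_left, tsum_mul_left,
      tsum_pow_div_fact, tsum_pow_div_fact, ← Real.exp_add, ← Real.exp_add]
    ring_nf
    rw [Real.exp_zero]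
  have hu_le : ∑' k, u k ≤ 1 - Real.exp ((a : ℝ) - b) := by
    rw [← htsum_g]
    exact Summable.tsum_le_tsum (fun k => Set.indicator_le_self' (fun i _ => hg_nonneg i) k) su sg
  have hh_nonpos : ∀ k : ℕ,
      (Real.exp (-(b : ℝ)) - Real.exp (-(a : ℝ))) * (a : ℝ) ^ k / k.factorial ≤ 0 := by
    intro k
    apply div_nonpos_of_nonpos_of_nonneg _ (by positivity)
    apply mul_nonpos_of_nonpos_of_nonneg _ (by positivity)
    have := Real.exp_le_exp.mpr (neg_le_neg hab')
    linarith
  have hv_nonpos : ∑' k, v k ≤ 0 :=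
    tsum_nonpos fun k => Set.indicator_nonpos (fun i _ => hh_nonpos i) k
  have htsum_h : ∑' k, (Real.exp (-(b : ℝ)) - Real.exp (-(a : ℝ))) * (a : ℝ) ^ k / k.factorial
      = Real.exp ((a : ℝ) - b) - 1 := by
    simp_rw [mul_div_assoc]
    rw [tsum_mul_left, tsum_pow_div_fact]
    rw [sub_mul, ← Real.exp_add, ← Real.exp_add]
    ring_nf
    rw [Real.exp_zero]
    ring
  have hv_ge : Real.exp ((a : ℝ) - b) - 1 ≤ ∑' k, v k := by
    rw [← htsum_h]
    refine Summable.tsum_le_tsum (fun k => ?_) sh sv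
    by_cases hk : k ∈ A
    · simp [v, Set.indicator, hk]
    · simp only [v, Set.indicator_of_notMem hk]
      exact hh_nonpos k
  rw [key, abs_le]
  have hexp := Real.add_one_le_exp ((a : ℝ) - b)
  constructor <;> linarith

/-- The total variation distance between two Poisson laws with parameters `θ₁, θ₂ > 0`
is at most `|θ₁ - θ₂|`. -/
theorem poisson_tv_dist_le
    (θ₁ θ₂ : NNReal) (h₁ : 0 < θ₁) (h₂ : 0 < θ₂) (A : Set ℕ) :
    |(poissonMeasure θ₁ A).toReal - (poissonMeasure θ₂ A).toReal| ≤
      |(θ₁ : ℝ) - (θ₂ : ℝ)| := by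
  rcases le_total θ₁ θ₂ with h | h
  · have h' : |(θ₁ : ℝ) - θ₂| = (θ₂ : ℝ) - θ₁ := by
      rw [abs_sub_comm]
      exact abs_of_nonneg (sub_nonneg.mpr (by exact_mod_cast h))
    rw [h', abs_sub_comm]
    exact poisson_main θ₁ θ₂ h A
  · have h' : |(θ₁ : ℝ) - θ₂| = (θ₁ : ℝ) - θ₂ :=
      abs_of_nonneg (sub_nonneg.mpr (by exact_mod_cast h))
    rw [h']
    exact poisson_main θ₂ θ₁ h A
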